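/- Let n ≥ 1, let ω_1, …, ω_n be pairwise distinct complex numbers, none lying on the real segment [0,1] ⊆ ℂ, and let n_1, …, n_n be positive integers. Set h(x) = ∏_{i=1}^n (x − ω_i)^{n_i}. Then for every natural number m, ∫_0^1 x^m / h(x) dx = Σ_{i=1}^n (1/(n_i − 1)!) · D^{(n_i−1)}[ ω ↦ g_m(ω) · ∏_{j≠i} (ω − ω_j)^{−n_j} ](ω_i), where D^{(k)} denotes the k-th complex iterated derivative. -/

import Mathlib

open Complex Finset

/-- `g m ω = ω^m (Log(1 - 1/ω) + ∑_{k=1}^m 1/(k ω^k))`. -/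
noncomputable def g (m : ℕ) (ω : ℂ) : ℂ :=
  ω ^ m * (Complex.log (1 - 1 / ω) + ∑ k ∈ Finset.Icc 1 m, 1 / ((k : ℂ) * ω ^ k))

open Polynomial Metric Set intervalIntegral MeasureTheory

def Sreg : Set ℂ := (Complex.ofReal '' Set.Icc 0 1)ᶜ

lemma mem_Sreg_iff {z : ℂ} : z ∈ Sreg ↔ ∀ x : ℝ, x ∈ Set.Icc (0:ℝ) 1 → z ≠ (x:ℂ) := by
  simp only [Sreg, Set.mem_compl_iff, Set.mem_image, not_exists, not_and]
  constructor
  · intro h x hx; exact fun he => h x hx he.symm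
  · intro h x hx he; exact h x hx he.symm

lemma sub_ne_zero_of_mem_Sreg {z : ℂ} (hz : z ∈ Sreg) {x : ℝ} (hx : x ∈ Set.Icc (0:ℝ) 1) :
    (x:ℂ) - z ≠ 0 := by
  intro h
  exact (mem_Sreg_iff.1 hz x hx) (by linear_combination -h)

lemma ne_zero_of_mem_Sreg {z : ℂ} (hz : z ∈ Sreg) : z ≠ 0 := by
  intro h
  exact mem_Sreg_iff.1 hz 0 (by norm_num) (by simp [h])

lemma slit_of_mem_Sreg {z : ℂ} (hz : z ∈ Sreg) {x : ℝ} (hx : x ∈ Set.Icc (0:ℝ) 1) :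
    1 - (x:ℂ) / z ∈ Complex.slitPlane := by
  by_contra hcon
  rw [Complex.mem_slitPlane_iff] at hcon
  push_neg at hcon
  obtain ⟨hre, him⟩ := hcon
  have him' : ((x:ℂ)/z).im = 0 := by
    have : (1 - (x:ℂ)/z).im = -((x:ℂ)/z).im := by simp
    rw [him] at this; linarith
  have hre' : 1 ≤ ((x:ℂ)/z).re := by
    have : (1 - (x:ℂ)/z).re = 1 - ((x:ℂ)/z).re := by simp
    rw [this] at hre; linarith
  set t : ℝ := ((x:ℂ)/z).re with ht
  have hzt : (x:ℂ)/z = (t:ℂ) := Complex.ext rfl him'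
  have hzne : z ≠ 0 := ne_zero_of_mem_Sreg hz
  have htpos : (0:ℝ) < t := by linarith
  have htne : (t:ℂ) ≠ 0 := by
    simp only [ne_eq, Complex.ofReal_eq_zero]; linarith
  have hz' : z = ((x / t : ℝ):ℂ) := by
    push_cast
    field_simp at hzt ⊢
    linear_combination -hzt
  have hx' : x / t ∈ Set.Icc (0:ℝ) 1 := by
    obtain ⟨hx0, hx1⟩ := hx
    refine ⟨by positivity, ?_⟩
    rw [div_le_one htpos]; linarith
  exact mem_Sreg_iff.1 hz _ hx' hz'

noncomputable def J (m k : ℕ) (z : ℂ) : ℂ :=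
  ∫ x in (0:ℝ)..1, (x:ℂ)^m * (((x:ℂ) - z)^(k+1))⁻¹

lemma contOn_integrand {z : ℂ} (hz : z ∈ Sreg) (m k : ℕ) :
    ContinuousOn (fun x : ℝ => (x:ℂ)^m * (((x:ℂ) - z)^(k+1))⁻¹) (Set.Icc 0 1) := by
  apply ContinuousOn.mul
  · exact (continuous_ofReal.pow m).continuousOn
  · apply ContinuousOn.inv₀
    · exact ((continuous_ofReal.sub continuous_const).pow _).continuousOn
    · intro x hx
      exact pow_ne_zero _ (sub_ne_zero_of_mem_Sreg hz hx)

lemma integrable_integrand {z : ℂ} (hz : z ∈ Sreg) (m k : ℕ) :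
    IntervalIntegrable (fun x : ℝ => (x:ℂ)^m * (((x:ℂ) - z)^(k+1))⁻¹) volume 0 1 := by
  apply ContinuousOn.intervalIntegrable
  rw [Set.uIcc_of_le (by norm_num)]
  exact contOn_integrand hz m k

lemma sum_Icc_reindex (m : ℕ) (F : ℕ → ℂ) :
    ∑ k ∈ Finset.Icc 1 m, F k = ∑ i ∈ Finset.range m, F (i+1) := by
  induction m with
  | zero => simp
  | succ m IH =>
    rw [Finset.sum_Icc_succ_top (by omega), IH, Finset.sum_range_succ]

lemma J_zero_eq_g (m : ℕ) {z : ℂ} (hz : z ∈ Sreg) : J m 0 z = g m z := by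
  have hzne : z ≠ 0 := ne_zero_of_mem_Sreg hz
  set A : ℝ → ℂ := fun x => (∑ k ∈ Finset.Icc 1 m, z^(m-k) * (x:ℂ)^k / k)
      + z^m * Complex.log (1 - (x:ℂ)/z) with hA
  have hderiv : ∀ x ∈ Set.uIcc (0:ℝ) 1,
      HasDerivAt A ((x:ℂ)^m * (((x:ℂ) - z)^(0+1))⁻¹) x := by
    intro x hx
    rw [Set.uIcc_of_le (by norm_num)] at hx
    have hsub : (x:ℂ) - z ≠ 0 := sub_ne_zero_of_mem_Sreg hz hx
    have hslit : 1 - (x:ℂ)/z ∈ Complex.slitPlane := slit_of_mem_Sreg hz hx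
    have hne : 1 - (x:ℂ)/z ≠ 0 := Complex.slitPlane_ne_zero hslit
    have h1 : HasDerivAt (fun w : ℂ => (∑ k ∈ Finset.Icc 1 m, z^(m-k) * w^k / k)
        + z^m * Complex.log (1 - w/z))
        ((∑ k ∈ Finset.Icc 1 m, z^(m-k) * (x:ℂ)^(k-1)) + z^m * ((x:ℂ) - z)⁻¹) (x:ℂ) := by
      apply HasDerivAt.add
      · apply HasDerivAt.fun_sum
        intro k hk
        rw [Finset.mem_Icc] at hk
        have hp : HasDerivAt (fun w : ℂ => w^k) ((k:ℂ) * (x:ℂ)^(k-1)) (x:ℂ) := by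
          simpa using hasDerivAt_pow k (x:ℂ)
        have h2 := (hp.const_mul (z^(m-k))).div_const (k:ℂ)
        convert h2 using 1
        swap
        have hkne : (k:ℂ) ≠ 0 := by
          simp only [ne_eq, Nat.cast_eq_zero]; omega
        rw [mul_div_assoc, mul_div_cancel_left₀ _ hkne]
        rfl
      · have hinner : HasDerivAt (fun w : ℂ => 1 - w/z) (-(1/z)) (x:ℂ) := by
          simpa using ((hasDerivAt_id (x:ℂ)).div_const z).const_sub 1
        have hlog := (Complex.hasDerivAt_log hslit).comp (x:ℂ) hinner
        have h3 := hlog.const_mul (z^m)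
        have hzx : z - (x:ℂ) ≠ 0 := by
          intro h; apply hsub; linear_combination -h
        have hrw : (1 - (x:ℂ)/z)⁻¹ * -(1/z) = ((x:ℂ) - z)⁻¹ := by
          have e1 : (1 - (x:ℂ)/z) = (z-x)/z := by rw [sub_div, div_self hzne]
          have e2 : ((x:ℂ) - z) = -(z-x) := by ring
          rw [e1, inv_div, e2, inv_neg]
          field_simp
        rw [← hrw]
        exact h3
    have := h1.comp_ofReal
    convert this using 1
    have hg : (∑ i ∈ Finset.range m, (x:ℂ)^i * z^(m-1-i)) * ((x:ℂ) - z) = (x:ℂ)^m - z^m :=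
      geom_sum₂_mul _ _ m
    have hsum : ∑ k ∈ Finset.Icc 1 m, z^(m-k) * (x:ℂ)^(k-1)
        = ∑ i ∈ Finset.range m, (x:ℂ)^i * z^(m-1-i) := by
      rw [sum_Icc_reindex m (fun k => z^(m-k) * (x:ℂ)^(k-1))]
      refine Finset.sum_congr rfl fun i hi => ?_
      rw [Finset.mem_range] at hi
      have e1 : m - (i+1) = m - 1 - i := by omega
      rw [e1, Nat.add_sub_cancel]
      ring
    rw [hsum]
    simp only [zero_add, pow_one]
    refine mul_right_cancel₀ hsub ?_
    rw [add_mul, inv_mul_cancel_right₀ hsub, inv_mul_cancel_right₀ hsub]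
    linear_combination -hg
  have hkey := intervalIntegral.integral_eq_sub_of_hasDerivAt hderiv (integrable_integrand hz m 0)
  rw [J, hkey]
  have hA0 : A 0 = 0 := by
    simp only [hA, Complex.ofReal_zero, zero_div, sub_zero, Complex.log_one, mul_zero, add_zero]
    rw [Finset.sum_eq_zero]
    intro k hk
    rw [Finset.mem_Icc] at hk
    rw [zero_pow (by omega)]
    simp
  rw [hA0, sub_zero, hA]
  simp only [Complex.ofReal_one, one_pow]
  rw [g, mul_add, add_comm]
  congr 1
  rw [Finset.mul_sum]
  refine Finset.sum_congr rfl fun k hk => ?_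
  rw [Finset.mem_Icc] at hk
  have hkne : (k:ℂ) ≠ 0 := by simp only [ne_eq, Nat.cast_eq_zero]; omega
  have hzk : z^k ≠ 0 := pow_ne_zero _ hzne
  rw [pow_sub₀ z hzne hk.2]
  field_simp

lemma isOpen_Sreg : IsOpen Sreg := by
  rw [Sreg, isOpen_compl_iff]
  exact (isCompact_Icc.image Complex.continuous_ofReal).isClosed

lemma hasDerivAt_J (m k : ℕ) {z : ℂ} (hz : z ∈ Sreg) :
    HasDerivAt (J m k) (((k:ℂ)+1) * J m (k+1) z) z := by
  obtain ⟨ε, hε, hball⟩ : ∃ ε > 0, Metric.closedBall z ε ⊆ Sreg := by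
    rcases (Metric.nhds_basis_closedBall.mem_iff).1 (isOpen_Sreg.mem_nhds hz) with ⟨ε, hε, h⟩
    exact ⟨ε, hε, h⟩
  set F : ℂ → ℝ → ℂ := fun w x => (x:ℂ)^m * (((x:ℂ) - w)^(k+1))⁻¹ with hF
  set F' : ℂ → ℝ → ℂ := fun w x => ((k:ℂ)+1) * ((x:ℂ)^m * (((x:ℂ) - w)^(k+2))⁻¹) with hF'
  have hIoc : Set.uIoc (0:ℝ) 1 ⊆ Set.Icc 0 1 := by
    rw [Set.uIoc_of_le (by norm_num : (0:ℝ) ≤ 1)]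
    exact Set.Ioc_subset_Icc_self
  have hcont : ContinuousOn (fun p : ℝ × ℂ => ((k:ℂ)+1) * ((p.1:ℂ)^m * (((p.1:ℂ) - p.2)^(k+2))⁻¹))
      (Set.Icc 0 1 ×ˢ Metric.closedBall z ε) := by
    apply ContinuousOn.mul continuousOn_const
    apply ContinuousOn.mul
    · exact ((continuous_ofReal.comp continuous_fst).pow m).continuousOn
    · apply ContinuousOn.inv₀
      · exact (((continuous_ofReal.comp continuous_fst).sub continuous_snd).pow _).continuousOn
      · rintro ⟨x, w⟩ ⟨hx, hw⟩
        exact pow_ne_zero _ (sub_ne_zero_of_mem_Sreg (hball hw) hx)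
  obtain ⟨C, hC⟩ := ((isCompact_Icc.prod (isCompact_closedBall z ε)).exists_bound_of_continuousOn
    hcont)
  have key := intervalIntegral.hasDerivAt_integral_of_dominated_loc_of_deriv_le
    (μ := MeasureTheory.volume) (F := F) (F' := F') (x₀ := z) (a := 0) (b := 1)
    (bound := fun _ => C) (Metric.ball_mem_nhds z hε) ?_ ?_ ?_ ?_ ?_ ?_
  · have h2 : ∫ x in (0:ℝ)..1, F' z x = ((k:ℂ)+1) * J m (k+1) z := by
      rw [hF']
      rw [intervalIntegral.integral_const_mul]
      rfl
    exact h2 ▸ key.2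
  · filter_upwards [isOpen_Sreg.mem_nhds hz] with w hw
    exact ((contOn_integrand hw m k).mono hIoc).aestronglyMeasurable measurableSet_uIoc
  · exact integrable_integrand hz m k
  · exact ((continuousOn_const.mul (contOn_integrand hz m (k+1))).mono
      hIoc).aestronglyMeasurable measurableSet_uIoc
  · apply MeasureTheory.ae_of_all
    intro x hx w hw
    exact hC ⟨x, w⟩ ⟨hIoc hx, Metric.ball_subset_closedBall hw⟩
  · exact intervalIntegrable_const
  · apply MeasureTheory.ae_of_all
    intro x hx w hw
    have hxI : x ∈ Set.Icc (0:ℝ) 1 := hIoc hx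
    have hwS : w ∈ Sreg := hball (Metric.ball_subset_closedBall hw)
    have hsub : (x:ℂ) - w ≠ 0 := sub_ne_zero_of_mem_Sreg hwS hxI
    have h1 : HasDerivAt (fun w : ℂ => (x:ℂ) - w) (-1) w := by
      simpa using (hasDerivAt_id w).const_sub (x:ℂ)
    have h2 := h1.pow (k+1)
    have h3 := h2.inv (pow_ne_zero _ hsub)
    have h4 := h3.const_mul ((x:ℂ)^m)
    have hk2 : ((x:ℂ)-w)^k ≠ 0 := pow_ne_zero _ hsub
    have hD : (x:ℂ)^m * (-((((k+1):ℕ):ℂ) * ((x:ℂ)-w)^(k+1-1) * -1) / ((((x:ℂ)-w)^(k+1))^2))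
        = F' w x := by
      simp only [Nat.add_sub_cancel, mul_neg_one, neg_neg]
      rw [show ((((x:ℂ)-w)^(k+1))^2) = ((x:ℂ)-w)^k * ((x:ℂ)-w)^(k+2) from by ring, hF']
      rw [div_eq_mul_inv, mul_inv]
      have hcc : ((x:ℂ)-w)^k * (((x:ℂ)-w)^k)⁻¹ = 1 := mul_inv_cancel₀ hk2
      push_cast
      linear_combination ((k:ℂ)+1) * (x:ℂ)^m * (((x:ℂ)-w)^(k+2))⁻¹ * hcc
    exact hD ▸ h4

lemma analyticOnNhd_g (m : ℕ) : AnalyticOnNhd ℂ (g m) Sreg := by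
  apply DifferentiableOn.analyticOnNhd _ isOpen_Sreg
  intro z hz
  have hd : DifferentiableAt ℂ (g m) z := by
    have hev : g m =ᶠ[nhds z] J m 0 := by
      filter_upwards [isOpen_Sreg.mem_nhds hz] with w hw using (J_zero_eq_g m hw).symm
    exact (Filter.EventuallyEq.differentiableAt_iff hev).2 (hasDerivAt_J m 0 hz).differentiableAt
  exact hd.differentiableWithinAt

lemma iteratedDeriv_g (m k : ℕ) {z : ℂ} (hz : z ∈ Sreg) :
    iteratedDeriv k (g m) z = (k.factorial : ℂ) * J m k z := by
  induction k generalizing z with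
  | zero => simpa using (J_zero_eq_g m hz).symm
  | succ k IH =>
    have hev : iteratedDeriv k (g m) =ᶠ[nhds z] (fun w => (k.factorial:ℂ) * J m k w) := by
      filter_upwards [isOpen_Sreg.mem_nhds hz] with w hw using IH hw
    rw [iteratedDeriv_succ, hev.deriv_eq]
    rw [deriv_const_mul _ (hasDerivAt_J m k hz).differentiableAt, (hasDerivAt_J m k hz).deriv]
    rw [Nat.factorial_succ]
    push_cast
    ring

/-- Leibniz rule for iterated derivatives of analytic functions on an open set. -/
lemma iteratedDeriv_mul_analytic {U : Set ℂ} (hU : IsOpen U) {f h : ℂ → ℂ}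
    (hf : AnalyticOnNhd ℂ f U) (hh : AnalyticOnNhd ℂ h U) (n : ℕ) :
    ∀ x ∈ U, iteratedDeriv n (fun z => f z * h z) x =
      ∑ k ∈ Finset.range (n+1), (n.choose k : ℂ) *
        (iteratedDeriv k f x * iteratedDeriv (n-k) h x) := by
  have hdiff : ∀ (φ : ℂ → ℂ), AnalyticOnNhd ℂ φ U → ∀ (k : ℕ) {x : ℂ}, x ∈ U →
      DifferentiableAt ℂ (iteratedDeriv k φ) x := by
    intro φ hφ k x hx
    rw [iteratedDeriv_eq_iterate]
    exact ((hφ.iterated_deriv k) x hx).differentiableAt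
  have hder : ∀ (φ : ℂ → ℂ) (k : ℕ) {x : ℂ},
      deriv (iteratedDeriv k φ) x = iteratedDeriv (k+1) φ x := by
    intro φ k x; rw [iteratedDeriv_succ]
  induction n with
  | zero => intro x hx; simp
  | succ n IH =>
    intro x hx
    have hev : iteratedDeriv n (fun z => f z * h z) =ᶠ[nhds x]
        (fun y => ∑ k ∈ Finset.range (n+1), (n.choose k : ℂ) *
          (iteratedDeriv k f y * iteratedDeriv (n-k) h y)) := by
      filter_upwards [hU.mem_nhds hx] with y hy using IH y hy
    rw [iteratedDeriv_succ, hev.deriv_eq, deriv_fun_sum (A := fun k y => (n.choose k : ℂ) *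
      (iteratedDeriv k f y * iteratedDeriv (n-k) h y)) (fun k hk =>
      (((hdiff f hf k hx).mul (hdiff h hh (n-k) hx)).const_mul _))]
    have : ∀ k ∈ Finset.range (n+1),
        deriv (fun y => (n.choose k : ℂ) * (iteratedDeriv k f y * iteratedDeriv (n-k) h y)) x
        = (n.choose k : ℂ) * (iteratedDeriv (k+1) f x * iteratedDeriv (n-k) h x
            + iteratedDeriv k f x * iteratedDeriv (n-k+1) h x) := by
      intro k hk
      rw [deriv_const_mul (d := fun y => iteratedDeriv k f y * iteratedDeriv (n-k) h y) _
        ((hdiff f hf k hx).mul (hdiff h hh (n-k) hx)),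
        deriv_fun_mul (hdiff f hf k hx) (hdiff h hh (n-k) hx), hder, hder]
    rw [Finset.sum_congr rfl this]
    -- combinatorial reshuffle
    have key : ∑ k ∈ Finset.range (n+1), (n.choose k : ℂ) *
          (iteratedDeriv (k+1) f x * iteratedDeriv (n-k) h x
            + iteratedDeriv k f x * iteratedDeriv (n-k+1) h x)
        = ∑ k ∈ Finset.range (n+2), ((n+1).choose k : ℂ) *
          (iteratedDeriv k f x * iteratedDeriv (n+1-k) h x) := by
      set A : ℕ → ℂ := fun k => iteratedDeriv k f x
      set B : ℕ → ℂ := fun k => iteratedDeriv k h x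
      have hsplit : ∑ k ∈ Finset.range (n+1), (n.choose k : ℂ) *
            (A (k+1) * B (n-k) + A k * B (n-k+1))
          = (∑ k ∈ Finset.range (n+1), (n.choose k : ℂ) * (A (k+1) * B (n-k)))
            + ∑ k ∈ Finset.range (n+1), (n.choose k : ℂ) * (A k * B (n+1-k)) := by
        rw [← Finset.sum_add_distrib]
        refine Finset.sum_congr rfl fun k hk => ?_
        rw [Finset.mem_range] at hk
        have : n - k + 1 = n + 1 - k := by omega
        rw [this]; ring
      rw [hsplit]
      rw [Finset.sum_range_succ' (fun k => ((n+1).choose k : ℂ) * (A k * B (n+1-k))) (n+1)]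
      have h2 : ∑ k ∈ Finset.range (n+1), (n.choose k : ℂ) * (A k * B (n+1-k))
          = (∑ i ∈ Finset.range n, (n.choose (i+1) : ℂ) * (A (i+1) * B (n-i)))
            + (n.choose 0 : ℂ) * (A 0 * B (n+1)) := by
        rw [Finset.sum_range_succ' (fun k => (n.choose k : ℂ) * (A k * B (n+1-k))) n]
        congr 1
        refine Finset.sum_congr rfl fun i hi => ?_
        have : n + 1 - (i+1) = n - i := by omega
        rw [this]
      rw [h2]
      have h3 : ∑ i ∈ Finset.range (n+1), ((n+1).choose (i+1) : ℂ) * (A (i+1) * B (n+1-(i+1)))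
          = ∑ i ∈ Finset.range (n+1), ((n.choose i : ℂ) + (n.choose (i+1) : ℂ)) *
              (A (i+1) * B (n-i)) := by
        refine Finset.sum_congr rfl fun i hi => ?_
        have hc : (n+1).choose (i+1) = n.choose i + n.choose (i+1) := Nat.choose_succ_succ' n i
        have : n + 1 - (i+1) = n - i := by omega
        rw [hc, this]; push_cast; ring
      rw [h3]
      have h4 : ∑ i ∈ Finset.range (n+1), (n.choose (i+1) : ℂ) * (A (i+1) * B (n-i))
          = ∑ i ∈ Finset.range n, (n.choose (i+1) : ℂ) * (A (i+1) * B (n-i)) := by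
        rw [Finset.sum_range_succ, Nat.choose_succ_self]; simp
      simp only [add_mul, Finset.sum_add_distrib, h4]
      simp [Nat.choose_zero_right]
      ring
    rw [key]

lemma taylor_pow' (r : ℂ) (p : Polynomial ℂ) (m : ℕ) :
    (taylor r) (p^m) = ((taylor r) p)^m := by
  induction m with
  | zero => simp
  | succ m IH => rw [pow_succ, taylor_mul, IH, pow_succ]

lemma taylor_X_sub_C_pow (r : ℂ) (l : ℕ) : (taylor r) ((X - Polynomial.C r)^l) = X^l := by
  rw [taylor_pow', map_sub, taylor_X, taylor_C]
  ring

lemma poly_pf (n : ℕ) (hn : 1 ≤ n) (ω : Fin n → ℂ) (hdist : Function.Injective ω)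
    (N : Fin n → ℕ) (hN : ∀ i, 1 ≤ N i) (a : Fin n → ℕ → ℂ)
    (ha : ∀ i, ∀ t < N i, (∑ kl ∈ Finset.HasAntidiagonal.antidiagonal t,
        a i kl.1 * ((Polynomial.taylor (ω i)
          (∏ j ∈ Finset.univ.erase i, (X - Polynomial.C (ω j))^(N j))).coeff kl.2))
        = if t = 0 then 1 else 0) :
    (1 : Polynomial ℂ) = ∑ i, (∑ l ∈ Finset.range (N i),
        Polynomial.C (a i l) * (X - Polynomial.C (ω i))^l) *
      (∏ j ∈ Finset.univ.erase i, (X - Polynomial.C (ω j))^(N j)) := by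
  set R : Fin n → Polynomial ℂ := fun i => ∏ j ∈ Finset.univ.erase i, (X - C (ω j))^(N j) with hR
  set SS : Fin n → Polynomial ℂ := fun i => ∑ l ∈ Finset.range (N i),
      C (a i l) * (X - C (ω i))^l with hSS
  set Q : Polynomial ℂ := 1 - ∑ i, SS i * R i with hQ
  suffices hQ0 : Q = 0 by
    have := sub_eq_zero.1 hQ0
    exact this
  -- divisibility at each pole
  have hdvd : ∀ i, (X - C (ω i))^(N i) ∣ Q := by
    intro i
    have hsplit : Q = (1 - SS i * R i) - ∑ i' ∈ Finset.univ.erase i, SS i' * R i' := by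
      rw [hQ, ← Finset.add_sum_erase _ _ (Finset.mem_univ i)]
      ring
    rw [hsplit]
    apply dvd_sub
    · -- taylor expansion argument
      have key : ∀ d < N i, ((taylor (ω i)) (1 - SS i * R i)).coeff d = 0 := by
        intro d hd
        rw [map_sub, taylor_mul, taylor_one]
        have hts : (taylor (ω i)) (SS i) = ∑ l ∈ Finset.range (N i), C (a i l) * X^l := by
          rw [hSS, map_sum]
          refine Finset.sum_congr rfl fun l hl => ?_
          rw [taylor_mul, taylor_C, taylor_X_sub_C_pow]
        rw [hts, Polynomial.coeff_sub, Polynomial.coeff_mul]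
        have hcoeff : ∀ kl ∈ Finset.HasAntidiagonal.antidiagonal d,
            (∑ l ∈ Finset.range (N i), C (a i l) * X^l).coeff kl.1 *
              ((taylor (ω i)) (R i)).coeff kl.2
            = a i kl.1 * ((taylor (ω i)) (R i)).coeff kl.2 := by
          intro kl hkl
          congr 1
          rw [Finset.HasAntidiagonal.mem_antidiagonal] at hkl
          have hk1 : kl.1 ∈ Finset.range (N i) := by
            rw [Finset.mem_range]; omega
          rw [Polynomial.finset_sum_coeff]
          rw [Finset.sum_eq_single_of_mem kl.1 hk1]
          · rw [Polynomial.coeff_C_mul, Polynomial.coeff_X_pow, if_pos rfl, mul_one]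
          · intro b _ hbne
            rw [Polynomial.coeff_C_mul, Polynomial.coeff_X_pow,
              if_neg (fun h => hbne h.symm), mul_zero]
        rw [Finset.sum_congr rfl hcoeff, ha i d hd]
        simp [Polynomial.coeff_one]
      have hXdvd : X ^ (N i) ∣ (taylor (ω i)) (1 - SS i * R i) := X_pow_dvd_iff.2 key
      obtain ⟨q, hq⟩ := hXdvd
      refine ⟨(taylor (-ω i)) q, ?_⟩
      have happ := congrArg (⇑(taylor (-ω i))) hq
      rw [taylor_taylor] at happ
      simp only [neg_add_cancel] at happ
      rw [show ((taylor (0:ℂ)) (1 - SS i * R i)) = 1 - SS i * R i by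
        simp [Polynomial.taylor_apply]] at happ
      rw [happ, taylor_mul, taylor_pow', taylor_X]
      congr 2
      rw [map_neg, ← sub_eq_add_neg]
    · apply Finset.dvd_sum
      intro i' hi'
      apply Dvd.dvd.mul_left
      have hmem : i ∈ Finset.univ.erase i' := by
        rw [Finset.mem_erase]
        exact ⟨(Finset.mem_erase.1 hi').1.symm, Finset.mem_univ i⟩
      exact Finset.dvd_prod_of_mem _ hmem
  have hcop : (↑(Finset.univ : Finset (Fin n)) : Set (Fin n)).Pairwise
      (Function.onFun IsCoprime fun i => (X - C (ω i))^(N i)) := by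
    intro i _ j _ hij
    exact ((Polynomial.pairwise_coprime_X_sub_C hdist) hij).pow
  have hprod_dvd : (∏ i, (X - C (ω i))^(N i)) ∣ Q := prod_dvd_of_coprime hcop fun i _ => hdvd i
  by_contra hQne
  have hdeg := Polynomial.natDegree_le_of_dvd hprod_dvd hQne
  have hdeg_prod : (∏ i, (X - C (ω i))^(N i)).natDegree = ∑ i, N i := by
    rw [Polynomial.natDegree_prod _ _ (fun i _ => pow_ne_zero _ (Polynomial.X_sub_C_ne_zero _))]
    simp [Polynomial.natDegree_pow]
  -- degree bound on Q
  have hQdeg : Q.natDegree ≤ (∑ i, N i) - 1 := by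
    rw [hQ]
    refine le_trans (Polynomial.natDegree_sub_le _ _) ?_
    rw [Polynomial.natDegree_one]
    simp only [max_le_iff]
    constructor
    · have hi0 : (⟨0, hn⟩ : Fin n) ∈ (Finset.univ : Finset (Fin n)) := Finset.mem_univ _
      have := Finset.single_le_sum (f := N) (fun i _ => Nat.zero_le _) hi0
      have := hN ⟨0, hn⟩
      omega
    · apply Polynomial.natDegree_sum_le_of_forall_le
      intro i _
      refine le_trans (Polynomial.natDegree_mul_le) ?_
      have h1 : (SS i).natDegree ≤ N i - 1 := by
        apply Polynomial.natDegree_sum_le_of_forall_le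
        intro l hl
        rw [Finset.mem_range] at hl
        refine le_trans (Polynomial.natDegree_C_mul_le _ _) ?_
        rw [Polynomial.natDegree_pow, Polynomial.natDegree_X_sub_C]
        omega
      have h2 : (R i).natDegree ≤ ∑ j ∈ Finset.univ.erase i, N j := by
        refine le_trans (Polynomial.natDegree_prod_le _ _) ?_
        apply Finset.sum_le_sum
        intro j _
        rw [Polynomial.natDegree_pow, Polynomial.natDegree_X_sub_C]
        omega
      have h3 : N i + ∑ j ∈ Finset.univ.erase i, N j = ∑ j, N j :=
        Finset.add_sum_erase _ _ (Finset.mem_univ i)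
      have := hN i
      omega
  have hsum1 : 1 ≤ ∑ i, N i := le_trans (hN ⟨0,hn⟩)
    (Finset.single_le_sum (fun i _ => Nat.zero_le _) (Finset.mem_univ _))
  rw [hdeg_prod] at hdeg
  omega

lemma iteratedDeriv_const' (t : ℕ) (c : ℂ) (x : ℂ) :
    iteratedDeriv t (fun _ => c) x = if t = 0 then c else 0 := by
  induction t generalizing c with
  | zero => simp
  | succ t IH =>
    rw [iteratedDeriv_succ',
      show deriv (fun _ : ℂ => c) = (fun _ : ℂ => (0:ℂ)) from funext fun y => deriv_const y c,
      IH]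
    simp

lemma iteratedDeriv_polyEval (d : ℕ) (p : Polynomial ℂ) (w : ℂ) :
    iteratedDeriv d (fun z => p.eval z) w = ((⇑Polynomial.derivative)^[d] p).eval w := by
  induction d generalizing p with
  | zero => simp
  | succ d IH =>
    rw [iteratedDeriv_succ',
      show (deriv fun z => p.eval z) = fun z => (Polynomial.derivative p).eval z from
        funext fun y => Polynomial.deriv p,
      IH (Polynomial.derivative p), Function.iterate_succ_apply]

lemma iteratedDeriv_polyEval_eq_taylor (p : Polynomial ℂ) (w : ℂ) (d : ℕ) :
    iteratedDeriv d (fun z => p.eval z) w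
      = (d.factorial : ℂ) * ((Polynomial.taylor w p).coeff d) := by
  rw [iteratedDeriv_polyEval, Polynomial.taylor_coeff, ← Polynomial.factorial_smul_hasseDeriv d]
  simp only [LinearMap.smul_apply]
  rw [nsmul_eq_mul, Polynomial.eval_mul, Polynomial.eval_natCast]

noncomputable def Pfun {n : ℕ} (ω : Fin n → ℂ) (N : Fin n → ℕ) (i : Fin n) (z : ℂ) : ℂ :=
  ∏ j ∈ Finset.univ.erase i, ((z - ω j) ^ (N j))⁻¹

theorem integral_rational_eq_sum_residues_higher_poles
    (n : ℕ) (hn : 1 ≤ n) (ω : Fin n → ℂ)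
    (hdist : Function.Injective ω)
    (hseg : ∀ i, ∀ x : ℝ, x ∈ Set.Icc (0 : ℝ) 1 → ω i ≠ (x : ℂ))
    (N : Fin n → ℕ) (hN : ∀ i, 1 ≤ N i) (m : ℕ) :
    (∫ x in (0:ℝ)..1, (x : ℂ) ^ m / ∏ i, ((x : ℂ) - ω i) ^ (N i)) =
      ∑ i, (1 / (Nat.factorial (N i - 1) : ℂ)) *
        iteratedDeriv (N i - 1)
          (fun z => g m z * ∏ j ∈ Finset.univ.erase i, ((z - ω j) ^ (N j))⁻¹) (ω i) := by
  classical
  have hSω : ∀ i, ω i ∈ Sreg := fun i => mem_Sreg_iff.2 (hseg i)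
  set U : Fin n → Set ℂ := fun i => Sreg ∩ (⋂ j ∈ Finset.univ.erase i, {ω j}ᶜ) with hU
  have hUopen : ∀ i, IsOpen (U i) := fun i =>
    isOpen_Sreg.inter (isOpen_biInter_finset fun j _ => isOpen_compl_singleton)
  have hUsub : ∀ i, U i ⊆ Sreg := fun i => Set.inter_subset_left
  have hUmem : ∀ i, ω i ∈ U i := by
    intro i
    refine ⟨hSω i, ?_⟩
    simp only [Set.mem_iInter, Set.mem_compl_iff, Set.mem_singleton_iff]
    intro j hj
    rw [Finset.mem_erase] at hj
    exact fun h => hj.1 (hdist h).symm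
  have hUne : ∀ i, ∀ z ∈ U i, ∀ j ∈ Finset.univ.erase i, z - ω j ≠ 0 := by
    intro i z hz j hj
    have h2 := hz.2
    simp only [Set.mem_iInter, Set.mem_compl_iff, Set.mem_singleton_iff] at h2
    exact sub_ne_zero.2 (h2 j hj)
  have hPanalytic : ∀ i, AnalyticOnNhd ℂ (Pfun ω N i) (U i) := by
    intro i
    apply DifferentiableOn.analyticOnNhd _ (hUopen i)
    intro z hz
    apply DifferentiableAt.differentiableWithinAt
    apply DifferentiableAt.fun_finsetProd
    intro j hj
    exact ((differentiableAt_id.sub (differentiableAt_const _)).pow _).inv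
      (pow_ne_zero _ (hUne i z hz j hj))
  set R : Fin n → Polynomial ℂ := fun i =>
    ∏ j ∈ Finset.univ.erase i, (X - Polynomial.C (ω j))^(N j) with hRdef
  have hReval : ∀ i (z : ℂ), (R i).eval z = ∏ j ∈ Finset.univ.erase i, (z - ω j)^(N j) := by
    intro i z
    rw [hRdef]
    simp [Polynomial.eval_prod]
  have hPR : ∀ i, ∀ z ∈ U i, Pfun ω N i z * (R i).eval z = 1 := by
    intro i z hz
    rw [hReval, Pfun, ← Finset.prod_mul_distrib]
    apply Finset.prod_eq_one
    intro j hj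
    exact inv_mul_cancel₀ (pow_ne_zero _ (hUne i z hz j hj))
  set a : Fin n → ℕ → ℂ := fun i k =>
    ((k.factorial : ℂ))⁻¹ * iteratedDeriv k (Pfun ω N i) (ω i) with ha_def
  have hRanalytic : ∀ i, AnalyticOnNhd ℂ (fun z => (R i).eval z) (U i) :=
    fun i => DifferentiableOn.analyticOnNhd ((R i).differentiable.differentiableOn) (hUopen i)
  -- convolution identity from Leibniz
  have hconv : ∀ i, ∀ t < N i, (∑ kl ∈ Finset.HasAntidiagonal.antidiagonal t,
      a i kl.1 * ((Polynomial.taylor (ω i) (R i)).coeff kl.2)) = if t = 0 then 1 else 0 := by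
    intro i t ht
    have hLeib := iteratedDeriv_mul_analytic (hUopen i) (hPanalytic i) (hRanalytic i) t
      (ω i) (hUmem i)
    have hone : iteratedDeriv t (fun z => Pfun ω N i z * (R i).eval z) (ω i)
        = if t = 0 then 1 else 0 := by
      have hev : (fun z => Pfun ω N i z * (R i).eval z) =ᶠ[nhds (ω i)] (fun _ => (1:ℂ)) := by
        filter_upwards [(hUopen i).mem_nhds (hUmem i)] with w hw using hPR i w hw
      rw [hev.iteratedDeriv_eq t, iteratedDeriv_const']
    have hkey : ∑ k ∈ Finset.range (t+1), (t.choose k : ℂ) *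
        (iteratedDeriv k (Pfun ω N i) (ω i) *
          iteratedDeriv (t-k) (fun z => (R i).eval z) (ω i)) = if t = 0 then 1 else 0 := by
      rw [← hLeib, hone]
    rw [Finset.Nat.sum_antidiagonal_eq_sum_range_succ_mk]
    have hstep : ∑ k ∈ Finset.range (t+1), a i k * ((Polynomial.taylor (ω i) (R i)).coeff (t - k))
        = (t.factorial : ℂ)⁻¹ * ∑ k ∈ Finset.range (t+1), (t.choose k : ℂ) *
          (iteratedDeriv k (Pfun ω N i) (ω i) *
            iteratedDeriv (t-k) (fun z => (R i).eval z) (ω i)) := by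
      rw [Finset.mul_sum]
      refine Finset.sum_congr rfl fun k hk => ?_
      rw [Finset.mem_range] at hk
      have hkt : k ≤ t := by omega
      have hcoeff : ((Polynomial.taylor (ω i) (R i)).coeff (t - k))
          = ((t-k).factorial : ℂ)⁻¹ * iteratedDeriv (t-k) (fun z => (R i).eval z) (ω i) := by
        rw [iteratedDeriv_polyEval_eq_taylor]
        have hne : ((t-k).factorial : ℂ) ≠ 0 := Nat.cast_ne_zero.2 (Nat.factorial_ne_zero _)
        field_simp
      rw [hcoeff, ha_def, Nat.cast_choose ℂ hkt]
      have h1 : (k.factorial : ℂ) ≠ 0 := Nat.cast_ne_zero.2 (Nat.factorial_ne_zero _)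
      have h2 : ((t-k).factorial : ℂ) ≠ 0 := Nat.cast_ne_zero.2 (Nat.factorial_ne_zero _)
      have h3 : (t.factorial : ℂ) ≠ 0 := Nat.cast_ne_zero.2 (Nat.factorial_ne_zero _)
      field_simp
      try ring
    rw [hstep, hkey]
    rcases Nat.eq_zero_or_pos t with h | h
    · subst h
      simp
    · rw [if_neg h.ne']
      exact mul_zero _
  -- polynomial partial fractions
  have hconv' := hconv
  simp only [hRdef] at hconv'
  have hpf := poly_pf n hn ω hdist N hN a hconv'
  -- evaluated partial fractions
  have hpfx : ∀ x : ℝ, x ∈ Set.Icc (0:ℝ) 1 →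
      (∏ i, ((x:ℂ) - ω i)^(N i))⁻¹ = ∑ i, ∑ l ∈ Finset.range (N i),
        a i l * (((x:ℂ) - ω i)^(N i - l))⁻¹ := by
    intro x hx
    have hne : ∀ i, ((x:ℂ) - ω i) ≠ 0 := fun i => sub_ne_zero_of_mem_Sreg (hSω i) hx
    have hev := congrArg (Polynomial.eval (x:ℂ)) hpf
    simp only [Polynomial.eval_one, Polynomial.eval_finset_sum, Polynomial.eval_mul,
      Polynomial.eval_prod, Polynomial.eval_pow, Polynomial.eval_sub, Polynomial.eval_X,
      Polynomial.eval_C] at hev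
    have hhne : (∏ i, ((x:ℂ) - ω i)^(N i)) ≠ 0 :=
      Finset.prod_ne_zero_iff.2 fun i _ => pow_ne_zero _ (hne i)
    apply mul_left_cancel₀ hhne
    rw [mul_inv_cancel₀ hhne, Finset.mul_sum, hev]
    refine Finset.sum_congr rfl fun i _ => ?_
    rw [Finset.mul_sum, Finset.sum_mul]
    refine Finset.sum_congr rfl fun l hl => ?_
    rw [Finset.mem_range] at hl
    have hfac : (∏ j, ((x:ℂ) - ω j)^(N j))
        = ((x:ℂ) - ω i)^(N i) * ∏ j ∈ Finset.univ.erase i, ((x:ℂ)-ω j)^(N j) :=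
      (Finset.mul_prod_erase _ _ (Finset.mem_univ i)).symm
    have hsplit : ((x:ℂ) - ω i)^(N i) = ((x:ℂ) - ω i)^(N i - l) * ((x:ℂ) - ω i)^l := by
      rw [← pow_add]
      congr 1
      omega
    rw [hfac, hsplit]
    have hcc : ((x:ℂ) - ω i)^(N i - l) * (((x:ℂ) - ω i)^(N i - l))⁻¹ = 1 :=
      mul_inv_cancel₀ (pow_ne_zero _ (hne i))
    linear_combination (-(a i l * ((x:ℂ) - ω i)^l *
      ∏ j ∈ Finset.univ.erase i, ((x:ℂ)-ω j)^(N j))) * hcc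
  -- rewrite each residue term
  have hRHS : ∀ i, (1 / (Nat.factorial (N i - 1) : ℂ)) *
      iteratedDeriv (N i - 1)
        (fun z => g m z * ∏ j ∈ Finset.univ.erase i, ((z - ω j) ^ (N j))⁻¹) (ω i)
      = ∑ l ∈ Finset.range (N i), a i (N i - 1 - l) * J m l (ω i) := by
    intro i
    have hganalytic : AnalyticOnNhd ℂ (g m) (U i) := (analyticOnNhd_g m).mono (hUsub i)
    have hrw : (fun z => g m z * ∏ j ∈ Finset.univ.erase i, ((z - ω j) ^ (N j))⁻¹)
        = fun z => g m z * Pfun ω N i z := rfl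
    rw [hrw, iteratedDeriv_mul_analytic (hUopen i) hganalytic (hPanalytic i) (N i - 1)
      (ω i) (hUmem i)]
    rw [show N i - 1 + 1 = N i from by have := hN i; omega]
    rw [Finset.mul_sum]
    refine Finset.sum_congr rfl fun l hl => ?_
    rw [Finset.mem_range] at hl
    rw [iteratedDeriv_g m l (hSω i)]
    have hPd : iteratedDeriv (N i - 1 - l) (Pfun ω N i) (ω i)
        = ((N i - 1 - l).factorial : ℂ) * a i (N i - 1 - l) := by
      rw [ha_def]
      have hne : ((N i - 1 - l).factorial : ℂ) ≠ 0 := Nat.cast_ne_zero.2 (Nat.factorial_ne_zero _)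
      field_simp
    rw [hPd, Nat.cast_choose ℂ (by omega : l ≤ N i - 1)]
    have h1 : (l.factorial : ℂ) ≠ 0 := Nat.cast_ne_zero.2 (Nat.factorial_ne_zero _)
    have h2 : ((N i - 1 - l).factorial : ℂ) ≠ 0 := Nat.cast_ne_zero.2 (Nat.factorial_ne_zero _)
    have h3 : ((N i - 1).factorial : ℂ) ≠ 0 := Nat.cast_ne_zero.2 (Nat.factorial_ne_zero _)
    field_simp
  rw [Finset.sum_congr rfl fun i _ => hRHS i]
  -- turn sums of integrals into an integral of a sum
  have hint1 : ∀ i, ∑ l ∈ Finset.range (N i), a i (N i - 1 - l) * J m l (ω i)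
      = ∫ x in (0:ℝ)..1, ∑ l ∈ Finset.range (N i),
          a i (N i - 1 - l) * ((x:ℂ)^m * (((x:ℂ) - ω i)^(l+1))⁻¹) := by
    intro i
    rw [intervalIntegral.integral_finset_sum (fun l _ =>
      (integrable_integrand (hSω i) m l).const_mul _)]
    refine Finset.sum_congr rfl fun l _ => ?_
    rw [intervalIntegral.integral_const_mul]
    rfl
  rw [Finset.sum_congr rfl fun i _ => hint1 i]
  have hintSum : ∀ i : Fin n, IntervalIntegrable (fun x : ℝ => ∑ l ∈ Finset.range (N i),
      a i (N i - 1 - l) * ((x:ℂ)^m * (((x:ℂ) - ω i)^(l+1))⁻¹)) volume 0 1 := by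
    intro i
    have h := IntervalIntegrable.sum (μ := volume) (a := 0) (b := 1) (Finset.range (N i))
      (f := fun l (x:ℝ) => a i (N i - 1 - l) * ((x:ℂ)^m * (((x:ℂ) - ω i)^(l+1))⁻¹))
      (fun l _ => (integrable_integrand (hSω i) m l).const_mul _)
    have he : (∑ l ∈ Finset.range (N i),
        fun (x:ℝ) => a i (N i - 1 - l) * ((x:ℂ)^m * (((x:ℂ) - ω i)^(l+1))⁻¹))
        = fun (x:ℝ) => ∑ l ∈ Finset.range (N i),
            a i (N i - 1 - l) * ((x:ℂ)^m * (((x:ℂ) - ω i)^(l+1))⁻¹) := by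
      funext y
      simp [Finset.sum_apply]
    rwa [he] at h
  have hswap := intervalIntegral.integral_finset_sum (μ := MeasureTheory.volume) (a := 0) (b := 1)
    (s := Finset.univ)
    (f := fun (i : Fin n) (x:ℝ) => ∑ l ∈ Finset.range (N i),
      a i (N i - 1 - l) * ((x:ℂ)^m * (((x:ℂ) - ω i)^(l+1))⁻¹))
    (fun i _ => hintSum i)
  rw [← hswap]
  apply intervalIntegral.integral_congr
  intro x hx
  rw [Set.uIcc_of_le (by norm_num : (0:ℝ) ≤ 1)] at hx
  simp only []
  -- pointwise identity
  have hrefl : ∀ i, ∑ l ∈ Finset.range (N i),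
      a i (N i - 1 - l) * ((x:ℂ)^m * (((x:ℂ) - ω i)^(l+1))⁻¹)
      = (x:ℂ)^m * ∑ l ∈ Finset.range (N i), a i l * (((x:ℂ) - ω i)^(N i - l))⁻¹ := by
    intro i
    rw [Finset.mul_sum]
    rw [← Finset.sum_range_reflect (fun l =>
      (x:ℂ)^m * (a i l * (((x:ℂ) - ω i)^(N i - l))⁻¹)) (N i)]
    refine Finset.sum_congr rfl fun l hl => ?_
    rw [Finset.mem_range] at hl
    rw [show N i - (N i - 1 - l) = l + 1 from by omega]
    ring
  rw [Finset.sum_congr rfl fun i _ => hrefl i, ← Finset.mul_sum, ← hpfx x hx, div_eq_mul_inv]
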